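/- Let σ be a consistent permutation that is a symmetry of the modal CNF formula φ (i.e. σ(φ) = φ). Then for every pointed Kripke model M, M ⊨ φ if and only if σ(M) ⊨ φ. -/
import Mathlib


namespace ModalSym

inductive Lit (Atom : Type) : Type
  | pos (a : Atom) : Lit Atom
  | neg (a : Atom) : Lit Atom
  deriving DecidableEq

namespace Lit
def flip {Atom : Type} : Lit Atom → Lit Atom
  | pos a => neg a
  | neg a => pos a
def atom {Atom : Type} : Lit Atom → Atom
  | pos a => a
  | neg a => a
end Lit

/-- A permutation `σ` of literals is consistent when it commutes with negation. -/
def Consistent {Atom : Type} (σ : Lit Atom → Lit Atom) : Prop :=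
  ∀ l, σ l.flip = (σ l).flip

/-- Modal CNF clauses of modal depth at most `n`: a clause is a finite set whose
elements are literals or modal literals `□ₘ C` / `¬□ₘ C` (`Bool` gives the polarity,
`true` for `□ₘ C`). -/
@[reducible] def ClauseT (Atom Mod : Type) : ℕ → Type
  | 0 => Finset (Lit Atom)
  | n+1 => Finset (Lit Atom ⊕ Bool × Mod × ClauseT Atom Mod n)

instance instDecEqClauseT {Atom Mod : Type} [DecidableEq Atom] [DecidableEq Mod] :
    ∀ n, DecidableEq (ClauseT Atom Mod n)
  | 0 => inferInstanceAs (DecidableEq (Finset (Lit Atom)))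
  | n+1 =>
    letI := instDecEqClauseT (Atom := Atom) (Mod := Mod) n
    inferInstanceAs (DecidableEq (Finset (Lit Atom ⊕ Bool × Mod × ClauseT Atom Mod n)))

/-- A modal CNF formula (of modal depth at most `n`): a finite set of clauses. -/
@[reducible] def FormT (Atom Mod : Type) (n : ℕ) : Type := Finset (ClauseT Atom Mod n)

/-- A pointed Kripke model. -/
structure KModel (Atom Mod : Type) : Type 1 where
  W : Type
  pt : W
  V : W → Set Atom
  R : Mod → W → W → Prop

def satLit {Atom : Type} (S : Set Atom) : Lit Atom → Prop
  | .pos a => a ∈ S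
  | .neg a => a ∉ S

def satClause {Atom Mod : Type} (M : KModel Atom Mod) :
    ∀ n, ClauseT Atom Mod n → M.W → Prop
  | 0, C, v => ∃ l ∈ C, satLit (M.V v) l
  | n+1, C, v => ∃ e ∈ C,
      match e with
      | Sum.inl l => satLit (M.V v) l
      | Sum.inr (b, m, C') =>
          cond b (∀ u, M.R m v u → satClause M n C' u)
                 (¬ ∀ u, M.R m v u → satClause M n C' u)

/-- `M ⊨ φ`. -/
def satForm {Atom Mod : Type} (M : KModel Atom Mod) {n : ℕ} (φ : FormT Atom Mod n) : Prop :=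
  ∀ C ∈ φ, satClause M n C M.pt

/-- `L_S`, the complete consistent set of literals generated by `S ⊆ Atom`. -/
def genLits {Atom : Type} (S : Set Atom) : Set (Lit Atom) := {l | satLit S l}

def permClause {Atom Mod : Type} [DecidableEq Atom] [DecidableEq Mod]
    (σ : Lit Atom → Lit Atom) : ∀ n, ClauseT Atom Mod n → ClauseT Atom Mod n
  | 0, C => C.image σ
  | n+1, C => C.image fun e =>
      match e with
      | Sum.inl l => Sum.inl (σ l)
      | Sum.inr (b, m, C') => Sum.inr (b, m, permClause σ n C')

/-- The action `σ(φ)` of a permutation of literals on a modal CNF formula. -/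
def permForm {Atom Mod : Type} [DecidableEq Atom] [DecidableEq Mod]
    (σ : Lit Atom → Lit Atom) {n : ℕ} (φ : FormT Atom Mod n) : FormT Atom Mod n :=
  φ.image (permClause σ n)

/-- The permuted model `σ(M)`, with `V'(v) = σ(L_{V(v)}) ∩ Atom`. -/
def permModel {Atom Mod : Type} (σ : Lit Atom → Lit Atom) (M : KModel Atom Mod) :
    KModel Atom Mod where
  W := M.W
  pt := M.pt
  V := fun v => {a | Lit.pos a ∈ σ '' genLits (M.V v)}
  R := M.R

def IsBisim {Atom Mod : Type} (M M' : KModel Atom Mod) (Z : M.W → M'.W → Prop) : Prop :=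
  Z M.pt M'.pt ∧
  (∀ v v', Z v v' → ∀ a, a ∈ M.V v ↔ a ∈ M'.V v') ∧
  (∀ v v' m u, Z v v' → M.R m v u → ∃ u', M'.R m v' u' ∧ Z u u') ∧
  (∀ v v' m u', Z v v' → M'.R m v' u' → ∃ u, M.R m v u ∧ Z u u')

def Bisimilar {Atom Mod : Type} (M M' : KModel Atom Mod) : Prop := ∃ Z, IsBisim M M' Z

def IsSigmaSim {Atom Mod : Type} (σ : Lit Atom → Lit Atom) (M M' : KModel Atom Mod)
    (Z : M.W → M'.W → Prop) : Prop :=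
  Z M.pt M'.pt ∧
  (∀ v v', Z v v' → ∀ l, l ∈ genLits (M.V v) ↔ σ l ∈ genLits (M'.V v')) ∧
  (∀ v v' m u, Z v v' → M.R m v u → ∃ u', M'.R m v' u' ∧ Z u u') ∧
  (∀ v v' m u', Z v v' → M'.R m v' u' → ∃ u, M.R m v u ∧ Z u u')

/-- `M ,→σ M'`. -/
def SigmaSim {Atom Mod : Type} (σ : Lit Atom → Lit Atom) (M M' : KModel Atom Mod) : Prop :=
  ∃ Z, IsSigmaSim σ M M' Z

/-- `IsPathFrom M v p`: `p` is a valid path (list of (modality, state) steps) starting at `v`. -/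
def IsPathFrom {Atom Mod : Type} (M : KModel Atom Mod) : M.W → List (Mod × M.W) → Prop
  | _, [] => True
  | v, s :: rest => M.R s.1 v s.2 ∧ IsPathFrom M s.2 rest

def pathLast {Atom Mod : Type} (M : KModel Atom Mod) : M.W → List (Mod × M.W) → M.W
  | v, [] => v
  | _, s :: rest => pathLast M s.2 rest

/-- A tree model: every state is the last state of exactly one rooted path. -/
def IsTree {Atom Mod : Type} (M : KModel Atom Mod) : Prop :=
  ∀ v : M.W, ∃! p : List (Mod × M.W), IsPathFrom M M.pt p ∧ pathLast M M.pt p = v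

/-- The depth of a state: the (minimal) length of a rooted path leading to it. -/
noncomputable def depth {Atom Mod : Type} (M : KModel Atom Mod) (v : M.W) : ℕ :=
  sInf {d | ∃ p, IsPathFrom M M.pt p ∧ pathLast M M.pt p = v ∧ p.length = d}

/-- The unravelling `T(M)`. -/
def unravel {Atom Mod : Type} (M : KModel Atom Mod) : KModel Atom Mod where
  W := {p : List (Mod × M.W) // IsPathFrom M M.pt p}
  pt := ⟨[], trivial⟩
  V := fun p => M.V (pathLast M M.pt p.1)
  R := fun m p p' => ∃ v, p'.1 = p.1 ++ [(m, v)]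

/-- `head(σ̄)`: the first permutation of the sequence, identity for the empty sequence. -/
def headP {Atom : Type} (σs : List (Lit Atom → Lit Atom)) : Lit Atom → Lit Atom :=
  σs.headD id

def lpermClause {Atom Mod : Type} [DecidableEq Atom] [DecidableEq Mod]
    (σs : List (Lit Atom → Lit Atom)) : ∀ n, ClauseT Atom Mod n → ClauseT Atom Mod n
  | 0, C => C.image (headP σs)
  | n+1, C => C.image fun e =>
      match e with
      | Sum.inl l => Sum.inl (headP σs l)
      | Sum.inr (b, m, C') => Sum.inr (b, m, lpermClause σs.tail n C')

/-- The action `σ̄(φ)` of a permutation sequence on a modal CNF formula. -/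
def lpermForm {Atom Mod : Type} [DecidableEq Atom] [DecidableEq Mod]
    (σs : List (Lit Atom → Lit Atom)) {n : ℕ} (φ : FormT Atom Mod n) : FormT Atom Mod n :=
  φ.image (lpermClause σs n)

/-- The layered permuted model `σ̄(M)` (meaningful on tree models):
at a state of depth `d` the permutation `head(σ̄_{d+1})` is used. -/
noncomputable def lpermModel {Atom Mod : Type} (σs : List (Lit Atom → Lit Atom))
    (M : KModel Atom Mod) : KModel Atom Mod where
  W := M.W
  pt := M.pt
  V := fun v => {a | Lit.pos a ∈ headP (σs.drop (depth M v)) '' genLits (M.V v)}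
  R := M.R

def IsLSim {Atom Mod : Type} (σs : List (Lit Atom → Lit Atom)) (M M' : KModel Atom Mod)
    (Z : ℕ → M.W → M'.W → Prop) : Prop :=
  Z 0 M.pt M'.pt ∧
  (∀ i v v', Z i v v' →
    ∀ l, l ∈ genLits (M.V v) ↔ headP (σs.drop i) l ∈ genLits (M'.V v')) ∧
  (∀ i v v' m u, Z i v v' → M.R m v u → ∃ u', M'.R m v' u' ∧ Z (i+1) u u') ∧
  (∀ i v v' m u', Z i v v' → M'.R m v' u' → ∃ u, M.R m v u ∧ Z (i+1) u u')

/-- `M ,→σ̄ M'`. -/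
def LSim {Atom Mod : Type} (σs : List (Lit Atom → Lit Atom)) (M M' : KModel Atom Mod) : Prop :=
  ∃ Z, IsLSim σs M M' Z

/-- `Mod_C(φ)`: the models in the class `𝒞` satisfying `φ`. -/
def ModC {Atom Mod : Type} (𝒞 : Set (KModel Atom Mod)) {n : ℕ} (φ : FormT Atom Mod n) :
    Set (KModel Atom Mod) := {M ∈ 𝒞 | satForm M φ}

/-- `φ ⊨_C ψ`. -/
def Entails {Atom Mod : Type} (𝒞 : Set (KModel Atom Mod)) {n₁ n₂ : ℕ}
    (φ : FormT Atom Mod n₁) (ψ : FormT Atom Mod n₂) : Prop :=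
  ModC 𝒞 φ ⊆ ModC 𝒞 ψ



lemma satLit_flip {Atom : Type} (S : Set Atom) (l : Lit Atom) :
    satLit S l.flip ↔ ¬ satLit S l := by
  cases l <;> simp [satLit, Lit.flip]

lemma satLit_perm {Atom : Type} (σ : Lit Atom → Lit Atom)
    (hbij : Function.Bijective σ) (hcons : Consistent σ)
    (S : Set Atom) (l : Lit Atom) :
    satLit {a | Lit.pos a ∈ σ '' genLits S} (σ l) ↔ satLit S l := by
  rcases h : σ l with a | a
  · simp only [satLit, Set.mem_setOf_eq]
    constructor
    · rintro ⟨l', hl', hσ⟩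
      rw [← h] at hσ
      obtain rfl := hbij.1 hσ
      exact hl'
    · intro hs; exact ⟨l, hs, h⟩
  · simp only [satLit, Set.mem_setOf_eq]
    have hf : σ l.flip = .pos a := by rw [hcons, h]; rfl
    constructor
    · intro hn
      by_contra hns
      exact hn ⟨l.flip, (satLit_flip S l).2 hns, hf⟩
    · rintro hs ⟨l', hl', hσ⟩
      obtain rfl : l' = l.flip := hbij.1 (hσ.trans hf.symm)
      exact (satLit_flip S l).1 hl' hs

lemma satClause_perm {Atom Mod : Type} [DecidableEq Atom] [DecidableEq Mod]
    (M : KModel Atom Mod) (σ : Lit Atom → Lit Atom)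
    (hbij : Function.Bijective σ) (hcons : Consistent σ) :
    ∀ (n : ℕ) (C : ClauseT Atom Mod n) (v : M.W),
      satClause (permModel σ M) n (permClause σ n C) v ↔ satClause M n C v
  | 0, C, v => by
    simp only [satClause, permClause, Finset.mem_image]
    constructor
    · rintro ⟨_, ⟨l, hl, rfl⟩, hsat⟩
      exact ⟨l, hl, (satLit_perm σ hbij hcons (M.V v) l).1 hsat⟩
    · rintro ⟨l, hl, hsat⟩
      exact ⟨σ l, ⟨l, hl, rfl⟩, (satLit_perm σ hbij hcons (M.V v) l).2 hsat⟩
  | n+1, C, v => by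
    simp only [satClause, permClause, Finset.mem_image]
    constructor
    · rintro ⟨_, ⟨e, he, rfl⟩, hsat⟩
      refine ⟨e, he, ?_⟩
      rcases e with l | ⟨b, m, C'⟩
      · exact (satLit_perm σ hbij hcons (M.V v) l).1 hsat
      · cases b <;> simp only [cond] at hsat ⊢ <;>
          [skip; skip] <;>
          · first
            | (intro hall; exact hsat fun u hu => (satClause_perm M σ hbij hcons n C' u).2 (hall u hu))
            | (intro u hu; exact (satClause_perm M σ hbij hcons n C' u).1 (hsat u hu))
    · rintro ⟨e, he, hsat⟩
      refine ⟨_, ⟨e, he, rfl⟩, ?_⟩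
      rcases e with l | ⟨b, m, C'⟩
      · exact (satLit_perm σ hbij hcons (M.V v) l).2 hsat
      · cases b <;> simp only [cond] at hsat ⊢
        · intro hall; exact hsat fun u hu => (satClause_perm M σ hbij hcons n C' u).1 (hall u hu)
        · intro u hu; exact (satClause_perm M σ hbij hcons n C' u).2 (hsat u hu)

/-- if `σ` is a symmetry of `φ` then `M ⊨ φ` iff `σ(M) ⊨ φ`. -/
theorem symmetry_sat_iff_permModel {Atom Mod : Type} [Countable Atom] [Countable Mod]
    [DecidableEq Atom] [DecidableEq Mod]
    (σ : Lit Atom → Lit Atom) (hbij : Function.Bijective σ) (hcons : Consistent σ)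
    {n : ℕ} (φ : FormT Atom Mod n) (hsym : permForm σ φ = φ)
    (M : KModel Atom Mod) :
    satForm M φ ↔ satForm (permModel σ M) φ := by
  constructor
  · intro hM C hC
    rw [← hsym] at hC
    rcases Finset.mem_image.1 hC with ⟨C', hC', rfl⟩
    exact (satClause_perm M σ hbij hcons n C' M.pt).2 (hM C' hC')
  · intro hM C hC
    have : permClause σ n C ∈ φ := hsym ▸ Finset.mem_image_of_mem _ hC
    exact (satClause_perm M σ hbij hcons n C M.pt).1 (hM _ this)

end ModalSym
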